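/- Let n be a positive integer, K an n×n real symmetric positive semidefinite matrix, λ > 0, y ∈ ℝⁿ, z ∈ ℝⁿ, and p ≥ 0 a real number. Then p · zᵀ (K + nλI)⁻¹ z ≤ (p/(n²λ)) · zᵀ (y yᵀ + n I) z. In particular, the ridge leverage function l_λ(w) = p(w) z_wᵀ (K + nλI)⁻¹ z_w is pointwise dominated by the surrogate leverage function L_λ(w) = (p(w)/(n²λ)) z_wᵀ (y yᵀ + n I) z_w. -/

import Mathlib

open Matrix

/-- the ridge leverage function is pointwise dominated by the surrogate
leverage function: `p · zᵀ (K + nλI)⁻¹ z ≤ (p/(n²λ)) · zᵀ (y yᵀ + n I) z`. -/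
theorem surrogate_dominates_leverage {n : ℕ} (hn : 0 < n)
    (K : Matrix (Fin n) (Fin n) ℝ) (hK : K.PosSemidef)
    (lam : ℝ) (hlam : 0 < lam) (y z : Fin n → ℝ) (p : ℝ) (hp : 0 ≤ p) :
    p * (z ⬝ᵥ ((K + (↑n * lam) • (1 : Matrix (Fin n) (Fin n) ℝ))⁻¹ *ᵥ z))
      ≤ (p / ((n : ℝ) ^ 2 * lam)) *
        (z ⬝ᵥ ((vecMulVec y y + (n : ℝ) • (1 : Matrix (Fin n) (Fin n) ℝ)) *ᵥ z)) := by
  have hn' : (0 : ℝ) < n := by exact_mod_cast hn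
  set c : ℝ := (n : ℝ) * lam with hc
  have hcpos : 0 < c := mul_pos hn' hlam
  set A := K + c • (1 : Matrix (Fin n) (Fin n) ℝ) with hAdef
  have hA : A.PosDef := by
    refine Matrix.PosDef.posSemidef_add hK ?_
    rw [smul_one_eq_diagonal]
    exact posDef_diagonal_iff.mpr fun _ => hcpos
  set w := A⁻¹ *ᵥ z with hw
  have hAw : A *ᵥ w = z := by
    rw [hw, mulVec_mulVec, Matrix.mul_nonsing_inv _ hA.det_pos.ne'.isUnit, one_mulVec]
  -- t := z ⬝ᵥ w is nonneg
  have ht0 : 0 ≤ z ⬝ᵥ w := by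
    have := hA.inv.posSemidef.dotProduct_mulVec_nonneg z
    simpa using this
  -- t = w ⬝ᵥ K w + c * (w ⬝ᵥ w)
  have hexp : z ⬝ᵥ w = w ⬝ᵥ (K *ᵥ w) + c * (w ⬝ᵥ w) := by
    calc z ⬝ᵥ w = w ⬝ᵥ (A *ᵥ w) := by rw [hAw, dotProduct_comm]
    _ = w ⬝ᵥ (K *ᵥ w) + c * (w ⬝ᵥ w) := by
        rw [hAdef, add_mulVec, dotProduct_add, smul_mulVec, dotProduct_smul,
          one_mulVec, smul_eq_mul]
  have hKw : 0 ≤ w ⬝ᵥ (K *ᵥ w) := by simpa using hK.dotProduct_mulVec_nonneg w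
  have hlow : c * (w ⬝ᵥ w) ≤ z ⬝ᵥ w := by linarith
  -- Cauchy-Schwarz
  have hCS : (z ⬝ᵥ w) ^ 2 ≤ (z ⬝ᵥ z) * (w ⬝ᵥ w) := by
    simpa [dotProduct, sq, ← sq] using
      Finset.sum_mul_sq_le_sq_mul_sq Finset.univ z w
  have hzz : 0 ≤ z ⬝ᵥ z := by
    simp only [dotProduct]
    exact Finset.sum_nonneg fun i _ => mul_self_nonneg _
  have hww : 0 ≤ w ⬝ᵥ w := by
    simp only [dotProduct]
    exact Finset.sum_nonneg fun i _ => mul_self_nonneg _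
  -- key : c * (z ⬝ᵥ w) ≤ z ⬝ᵥ z
  have hkey : c * (z ⬝ᵥ w) ≤ z ⬝ᵥ z := by
    rcases eq_or_lt_of_le ht0 with h | h
    · rw [← h, mul_zero]; exact hzz
    · have h1 : c * (z ⬝ᵥ w) ^ 2 ≤ c * ((z ⬝ᵥ z) * (w ⬝ᵥ w)) :=
        mul_le_mul_of_nonneg_left hCS hcpos.le
      have h2 : (z ⬝ᵥ z) * (c * (w ⬝ᵥ w)) ≤ (z ⬝ᵥ z) * (z ⬝ᵥ w) :=
        mul_le_mul_of_nonneg_left hlow hzz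
      have h3 : c * (z ⬝ᵥ w) * (z ⬝ᵥ w) ≤ (z ⬝ᵥ z) * (z ⬝ᵥ w) := by nlinarith
      exact le_of_mul_le_mul_right h3 h
  -- evaluate the RHS quadratic form
  have h1 : (vecMulVec y y) *ᵥ z = (y ⬝ᵥ z) • y := by
    ext i
    simp [mulVec, vecMulVec_apply, dotProduct, Finset.mul_sum, Finset.sum_mul,
      mul_assoc, mul_comm, mul_left_comm]
  have hRHS : z ⬝ᵥ ((vecMulVec y y + (n : ℝ) • (1 : Matrix (Fin n) (Fin n) ℝ)) *ᵥ z)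
      = (y ⬝ᵥ z) ^ 2 + (n : ℝ) * (z ⬝ᵥ z) := by
    rw [add_mulVec, dotProduct_add, h1, smul_mulVec, one_mulVec,
      dotProduct_smul, dotProduct_smul, smul_eq_mul, smul_eq_mul, dotProduct_comm z y, sq]
  rw [hRHS]
  have hn2 : (0 : ℝ) < (n : ℝ) ^ 2 * lam := by positivity
  rw [div_mul_eq_mul_div, le_div_iff₀ hn2]
  have h4 : p * ((n : ℝ) * (c * (z ⬝ᵥ w))) ≤ p * ((n : ℝ) * (z ⬝ᵥ z)) :=
    mul_le_mul_of_nonneg_left (mul_le_mul_of_nonneg_left hkey hn'.le) hp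
  have h5 : 0 ≤ p * (y ⬝ᵥ z) ^ 2 := mul_nonneg hp (sq_nonneg _)
  rw [show (n : ℝ) ^ 2 * lam = (n : ℝ) * c by rw [hc]; ring]
  linarith [h4, h5]
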